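/- Let z : Fin N → ℝ^D and e : Fin K → ℝ^D, and let π be a probability vector on Fin K with π_k = m_k/N, where the m_k are nonnegative integers summing to N. Then W_{dist}((1/N) ∑_n δ_{z n}, ∑_k π_k δ_{e k}) — the infimum, over all couplings of the two finitely supported measures on ℝ^D, of the expected Euclidean distance — equals (1/N) times the minimum, over all assignment functions σ : Fin N → Fin K with |σ⁻¹({k})| = m_k for every k, of ∑_n ‖z n − e (σ n)‖. -/

import Mathlib

open MeasureTheory ProbabilityTheory ENNReal

/-- Kantorovich cost `W_c(μ, ν)`: the infimum of `∫ c(x, y) dπ(x, y)` over all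
probability measures `π` on the product whose first marginal is `μ` and whose
second marginal is `ν`. -/
noncomputable def Wcost {X Y : Type*} [MeasurableSpace X] [MeasurableSpace Y]
    (c : X → Y → ℝ≥0∞) (μ : Measure X) (ν : Measure Y) : ℝ≥0∞ :=
  ⨅ (π : Measure (X × Y)) (_ : IsProbabilityMeasure π)
    (_ : π.fst = μ) (_ : π.snd = ν), ∫⁻ p, c p.1 p.2 ∂π

lemma exists_assignment {N K : ℕ} (m : Fin K → ℕ) (hm : ∑ k, m k = N) :
    ∃ τ : Fin N → Fin K, ∀ k, (Finset.univ.filter (fun i => τ i = k)).card = m k := by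
  have hcard : Fintype.card (Σ k : Fin K, Fin (m k)) = Fintype.card (Fin N) := by
    simp [Fintype.card_sigma, hm]
  let Φ : (Σ k : Fin K, Fin (m k)) ≃ Fin N := Fintype.equivOfCardEq hcard
  refine ⟨fun i => (Φ.symm i).1, fun k => ?_⟩
  have h1 : (Finset.univ.filter (fun i => (Φ.symm i).1 = k)).card
      = Fintype.card {i : Fin N // (Φ.symm i).1 = k} := (Fintype.card_subtype _).symm
  have e1 : {i : Fin N // (Φ.symm i).1 = k} ≃ {s : Σ k' : Fin K, Fin (m k') // s.1 = k} :=
    (Φ.subtypeEquiv (fun s => by simp)).symm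
  have e2 : {s : Σ k' : Fin K, Fin (m k') // s.1 = k} ≃ Fin (m k) := by
    refine ⟨fun s => (congrArg (fun t => Fin (m t)) s.2) ▸ s.1.2, fun j => ⟨⟨k, j⟩, rfl⟩, ?_, ?_⟩
    · rintro ⟨⟨k', j⟩, h⟩
      cases h; rfl
    · intro j; rfl
  rw [h1, Fintype.card_congr (e1.trans e2), Fintype.card_fin]

lemma map_finset_sum' {α β ι} [MeasurableSpace α] [MeasurableSpace β] {f : α → β}
    (hf : Measurable f) (s : Finset ι) (μ : ι → Measure α) :
    (∑ i ∈ s, μ i).map f = ∑ i ∈ s, (μ i).map f := by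
  classical
  induction s using Finset.induction with
  | empty => simp
  | insert _ _ h ih => simp [Finset.sum_insert h, Measure.map_add _ _ hf, ih]

lemma upper_aux {N K D : ℕ} (hN : 0 < N)
    (z : Fin N → EuclideanSpace ℝ (Fin D)) (e : Fin K → EuclideanSpace ℝ (Fin D))
    (m : Fin K → ℕ)
    (σ : Fin N → Fin K) (hσ : ∀ k, (Finset.univ.filter (fun i => σ i = k)).card = m k) :
    Wcost (fun a b => edist a b)
        ((N : ℝ≥0∞)⁻¹ • ∑ i, Measure.dirac (z i))
        (∑ k, ((m k : ℝ≥0∞) / (N : ℝ≥0∞)) • Measure.dirac (e k))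
      ≤ ENNReal.ofReal ((1 / (N : ℝ)) * ∑ i, ‖z i - e (σ i)‖) := by
  classical
  have hN0 : (N : ℝ≥0∞) ≠ 0 := Nat.cast_ne_zero.2 hN.ne'
  set π₀ : Measure (EuclideanSpace ℝ (Fin D) × EuclideanSpace ℝ (Fin D)) :=
    (N : ℝ≥0∞)⁻¹ • ∑ i, Measure.dirac ((z i, e (σ i))) with hπ₀
  have hprob : IsProbabilityMeasure π₀ := by
    constructor
    rw [hπ₀, Measure.smul_apply, Measure.finset_sum_apply]
    simp [ENNReal.inv_mul_cancel hN0 (natCast_ne_top N)]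
  have hfst : π₀.fst = (N : ℝ≥0∞)⁻¹ • ∑ i, Measure.dirac (z i) := by
    show π₀.map Prod.fst = _
    rw [hπ₀, Measure.map_smul, map_finset_sum' measurable_fst]
    simp_rw [Measure.map_dirac' measurable_fst]
  have hsnd : π₀.snd = ∑ k, ((m k : ℝ≥0∞) / (N : ℝ≥0∞)) • Measure.dirac (e k) := by
    show π₀.map Prod.snd = _
    rw [hπ₀, Measure.map_smul, map_finset_sum' measurable_snd]
    simp_rw [Measure.map_dirac' measurable_snd]
    have hgroup : ∑ i, Measure.dirac (e (σ i))
        = ∑ k, (m k : ℝ≥0∞) • Measure.dirac (e k) := by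
      rw [← Finset.sum_fiberwise' Finset.univ σ (fun k => Measure.dirac (e k))]
      refine Finset.sum_congr rfl fun k _ => ?_
      rw [Finset.sum_const, hσ k, Nat.cast_smul_eq_nsmul]
    rw [hgroup, Finset.smul_sum]
    refine Finset.sum_congr rfl fun k _ => ?_
    rw [smul_smul, ENNReal.div_eq_inv_mul]
  have hcost : ∫⁻ p, edist p.1 p.2 ∂π₀
      = ENNReal.ofReal ((1 / (N : ℝ)) * ∑ i, ‖z i - e (σ i)‖) := by
    rw [hπ₀, lintegral_smul_measure, lintegral_finset_sum_measure]
    simp_rw [lintegral_dirac]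
    have he : ∀ i, edist (z i) (e (σ i)) = ENNReal.ofReal ‖z i - e (σ i)‖ := fun i => by
      rw [edist_dist, dist_eq_norm]
    simp_rw [he]
    rw [← ENNReal.ofReal_sum_of_nonneg (fun i _ => norm_nonneg _),
      ENNReal.ofReal_mul (by positivity), one_div,
      ENNReal.ofReal_inv_of_pos (by exact_mod_cast hN), ENNReal.ofReal_natCast, smul_eq_mul]
  calc Wcost (fun a b => edist a b) _ _ ≤ ∫⁻ p, edist p.1 p.2 ∂π₀ := by
        exact iInf_le_of_le π₀ (iInf_le_of_le hprob (iInf_le_of_le hfst (iInf_le_of_le hsnd le_rfl)))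
    _ = _ := hcost

lemma meas_coe_finset {α} [MeasurableSpace α] [MeasurableSingletonClass α]
    (μ : Measure α) (s : Finset α) : μ ↑s = ∑ x ∈ s, μ {x} := by
  rw [show (↑s : Set α) = ⋃ x ∈ s, {x} by ext y; simp, measure_biUnion_finset]
  · exact fun x _ y _ hxy => Set.disjoint_singleton.2 hxy
  · exact fun b _ => measurableSet_singleton b

lemma sum_rotate {α β γ M : Type*} [AddCommMonoid M] [Fintype α] [Fintype β] [Fintype γ]
    (f : α → β → γ → M) :
    ∑ a, ∑ b, ∑ c, f a b c = ∑ c, ∑ a, ∑ b, f a b c :=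
  (Finset.sum_congr rfl fun _ _ => Finset.sum_comm).trans Finset.sum_comm

set_option maxHeartbeats 1000000 in
lemma lower_aux {N K D : ℕ} (hN : 0 < N)
    (z : Fin N → EuclideanSpace ℝ (Fin D)) (e : Fin K → EuclideanSpace ℝ (Fin D))
    (m : Fin K → ℕ)
    (τ : Fin N → Fin K) (hτ : ∀ k, (Finset.univ.filter (fun i => τ i = k)).card = m k)
    (σ₀ : Fin N → Fin K)
    (hmin : ∀ σ : Fin N → Fin K,
        (∀ k, (Finset.univ.filter (fun i => σ i = k)).card = m k) →
        ∑ i, ‖z i - e (σ₀ i)‖ ≤ ∑ i, ‖z i - e (σ i)‖)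
    (π : Measure (EuclideanSpace ℝ (Fin D) × EuclideanSpace ℝ (Fin D)))
    (hprob : IsProbabilityMeasure π)
    (hfst : π.fst = (N : ℝ≥0∞)⁻¹ • ∑ i, Measure.dirac (z i))
    (hsnd : π.snd = ∑ k, ((m k : ℝ≥0∞) / (N : ℝ≥0∞)) • Measure.dirac (e k)) :
    ENNReal.ofReal ((1 / (N : ℝ)) * ∑ i, ‖z i - e (σ₀ i)‖) ≤ ∫⁻ p, edist p.1 p.2 ∂π := by
  classical
  have hE : True := trivial
  have hNR : (0:ℝ) < N := by exact_mod_cast hN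
  set Sz : Finset (EuclideanSpace ℝ (Fin D)) := Finset.image z Finset.univ with hSz
  set Se : Finset (EuclideanSpace ℝ (Fin D)) := Finset.image e Finset.univ with hSe
  set n : EuclideanSpace ℝ (Fin D) → ℕ := fun x => (Finset.univ.filter (fun i => z i = x)).card with hn_def
  set w : EuclideanSpace ℝ (Fin D) → ℕ := fun y => ∑ k ∈ Finset.univ.filter (fun k => e k = y), m k with hw_def
  set P : EuclideanSpace ℝ (Fin D) → EuclideanSpace ℝ (Fin D) → ℝ := fun x y => (π {(x, y)}).toReal with hP_def
  -- singleton masses of the marginals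
  have hμ : ∀ x : EuclideanSpace ℝ (Fin D), π.fst {x} = (n x : ℝ≥0∞) / N := by
    intro x
    rw [hfst, Measure.smul_apply, Measure.finset_sum_apply]
    simp_rw [Measure.dirac_apply, Set.indicator_apply, Set.mem_singleton_iff, Pi.one_apply]
    rw [Finset.sum_boole, smul_eq_mul, ENNReal.div_eq_inv_mul]
  have hν : ∀ y : EuclideanSpace ℝ (Fin D), π.snd {y} = (w y : ℝ≥0∞) / N := by
    intro y
    rw [hsnd, Measure.finset_sum_apply]
    simp_rw [Measure.smul_apply, Measure.dirac_apply, Set.indicator_apply,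
      Set.mem_singleton_iff, Pi.one_apply, smul_eq_mul, mul_ite, mul_one, mul_zero]
    rw [← Finset.sum_filter]
    simp only [hw_def, Nat.cast_sum, ENNReal.div_eq_inv_mul, Finset.mul_sum]
  -- the coupling lives on Sz ×ˢ Se
  have hzc : π {p : EuclideanSpace ℝ (Fin D) × EuclideanSpace ℝ (Fin D) | p.1 ∉ Sz} = 0 := by
    have h1 : MeasurableSet ((↑Sz : Set (EuclideanSpace ℝ (Fin D)))ᶜ) := Sz.measurableSet.compl
    have h2 : π.fst ((↑Sz : Set (EuclideanSpace ℝ (Fin D)))ᶜ) = 0 := by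
      rw [hfst, Measure.smul_apply, Measure.finset_sum_apply]
      have : ∀ i, Measure.dirac (z i) ((↑Sz : Set (EuclideanSpace ℝ (Fin D)))ᶜ) = 0 := fun i => by
        rw [Measure.dirac_apply]
        simp [hSz, Set.indicator_apply, Finset.mem_image_of_mem z (Finset.mem_univ i)]
      simp [this]
    rw [← h2, Measure.fst_apply h1]
    rfl
  have hec : π {p : EuclideanSpace ℝ (Fin D) × EuclideanSpace ℝ (Fin D) | p.2 ∉ Se} = 0 := by
    have h1 : MeasurableSet ((↑Se : Set (EuclideanSpace ℝ (Fin D)))ᶜ) := Se.measurableSet.compl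
    have h2 : π.snd ((↑Se : Set (EuclideanSpace ℝ (Fin D)))ᶜ) = 0 := by
      rw [hsnd, Measure.finset_sum_apply]
      have : ∀ k, (((m k : ℝ≥0∞) / N) • Measure.dirac (e k)) ((↑Se : Set (EuclideanSpace ℝ (Fin D)))ᶜ) = 0 := fun k => by
        rw [Measure.smul_apply, Measure.dirac_apply]
        simp [hSe, Set.indicator_apply, Finset.mem_image_of_mem e (Finset.mem_univ k)]
      simp [this]
    rw [← h2, Measure.snd_apply h1]
    rfl
  -- row and column sums of the singleton masses
  have hrowE : ∀ x : EuclideanSpace ℝ (Fin D), ∑ y ∈ Se, π {(x, y)} = π.fst {x} := by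
    intro x
    have h1 : π.fst {x} = π (Prod.fst ⁻¹' {x}) := Measure.fst_apply (measurableSet_singleton x)
    have h2 : π (Prod.fst ⁻¹' {x}) = π (({x} : Set (EuclideanSpace ℝ (Fin D))) ×ˢ (↑Se : Set (EuclideanSpace ℝ (Fin D)))) := by
      refine le_antisymm ?_ (measure_mono (fun p hp => hp.1))
      calc π (Prod.fst ⁻¹' {x})
          ≤ π ((({x} : Set (EuclideanSpace ℝ (Fin D))) ×ˢ (↑Se : Set (EuclideanSpace ℝ (Fin D)))) ∪ {p : EuclideanSpace ℝ (Fin D) × EuclideanSpace ℝ (Fin D) | p.2 ∉ Se}) := by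
            refine measure_mono fun p hp => ?_
            by_cases h : p.2 ∈ Se
            · exact Or.inl ⟨hp, h⟩
            · exact Or.inr h
        _ ≤ π (({x} : Set (EuclideanSpace ℝ (Fin D))) ×ˢ (↑Se : Set (EuclideanSpace ℝ (Fin D)))) + π {p : EuclideanSpace ℝ (Fin D) × EuclideanSpace ℝ (Fin D) | p.2 ∉ Se} := measure_union_le _ _
        _ = π (({x} : Set (EuclideanSpace ℝ (Fin D))) ×ˢ (↑Se : Set (EuclideanSpace ℝ (Fin D)))) := by rw [hec, add_zero]
    have h3 : π (({x} : Set (EuclideanSpace ℝ (Fin D))) ×ˢ (↑Se : Set (EuclideanSpace ℝ (Fin D)))) = ∑ y ∈ Se, π {(x, y)} := by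
      rw [show ({x} : Set (EuclideanSpace ℝ (Fin D))) ×ˢ (↑Se : Set (EuclideanSpace ℝ (Fin D))) = ↑(({x} : Finset (EuclideanSpace ℝ (Fin D))) ×ˢ Se) by
        rw [Finset.coe_product, Finset.coe_singleton]]
      rw [meas_coe_finset, Finset.sum_product, Finset.sum_singleton]
    rw [h1, h2, h3]
  have hcolE : ∀ y : EuclideanSpace ℝ (Fin D), ∑ x ∈ Sz, π {(x, y)} = π.snd {y} := by
    intro y
    have h1 : π.snd {y} = π (Prod.snd ⁻¹' {y}) := Measure.snd_apply (measurableSet_singleton y)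
    have h2 : π (Prod.snd ⁻¹' {y}) = π ((↑Sz : Set (EuclideanSpace ℝ (Fin D))) ×ˢ ({y} : Set (EuclideanSpace ℝ (Fin D)))) := by
      refine le_antisymm ?_ (measure_mono (fun p hp => hp.2))
      calc π (Prod.snd ⁻¹' {y})
          ≤ π (((↑Sz : Set (EuclideanSpace ℝ (Fin D))) ×ˢ ({y} : Set (EuclideanSpace ℝ (Fin D)))) ∪ {p : EuclideanSpace ℝ (Fin D) × EuclideanSpace ℝ (Fin D) | p.1 ∉ Sz}) := by
            refine measure_mono fun p hp => ?_
            by_cases h : p.1 ∈ Sz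
            · exact Or.inl ⟨h, hp⟩
            · exact Or.inr h
        _ ≤ π ((↑Sz : Set (EuclideanSpace ℝ (Fin D))) ×ˢ ({y} : Set (EuclideanSpace ℝ (Fin D)))) + π {p : EuclideanSpace ℝ (Fin D) × EuclideanSpace ℝ (Fin D) | p.1 ∉ Sz} := measure_union_le _ _
        _ = π ((↑Sz : Set (EuclideanSpace ℝ (Fin D))) ×ˢ ({y} : Set (EuclideanSpace ℝ (Fin D)))) := by rw [hzc, add_zero]
    have h3 : π ((↑Sz : Set (EuclideanSpace ℝ (Fin D))) ×ˢ ({y} : Set (EuclideanSpace ℝ (Fin D)))) = ∑ x ∈ Sz, π {(x, y)} := by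
      rw [show (↑Sz : Set (EuclideanSpace ℝ (Fin D))) ×ˢ ({y} : Set (EuclideanSpace ℝ (Fin D))) = ↑(Sz ×ˢ ({y} : Finset (EuclideanSpace ℝ (Fin D)))) by
        rw [Finset.coe_product, Finset.coe_singleton]]
      rw [meas_coe_finset, Finset.sum_product]
      simp
    rw [h1, h2, h3]
  -- real versions
  have hrow : ∀ x : EuclideanSpace ℝ (Fin D), ∑ y ∈ Se, P x y = (n x : ℝ) / N := by
    intro x
    have := congrArg ENNReal.toReal ((hrowE x).trans (hμ x))
    rwa [ENNReal.toReal_sum (fun y _ => measure_ne_top π _), ENNReal.toReal_div,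
      ENNReal.toReal_natCast, ENNReal.toReal_natCast] at this
  have hcol : ∀ y : EuclideanSpace ℝ (Fin D), ∑ x ∈ Sz, P x y = (w y : ℝ) / N := by
    intro y
    have := congrArg ENNReal.toReal ((hcolE y).trans (hν y))
    rwa [ENNReal.toReal_sum (fun x _ => measure_ne_top π _), ENNReal.toReal_div,
      ENNReal.toReal_natCast, ENNReal.toReal_natCast] at this
  have hPnn : ∀ x y : EuclideanSpace ℝ (Fin D), 0 ≤ P x y := fun x y => ENNReal.toReal_nonneg
  have hP0 : ∀ x y : EuclideanSpace ℝ (Fin D), w y = 0 → P x y = 0 := by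
    intro x y hw0
    have h1 : π {((x, y) : EuclideanSpace ℝ (Fin D) × EuclideanSpace ℝ (Fin D))} ≤ π.snd {y} := by
      rw [Measure.snd_apply (measurableSet_singleton y)]
      exact measure_mono (fun p hp => by simp_all)
    rw [hν y, hw0] at h1
    simp only [Nat.cast_zero, ENNReal.zero_div, le_zero_iff] at h1
    rw [hP_def]; simp [h1]
  -- positivity of counts
  have hn : ∀ i, 0 < n (z i) := fun i =>
    Finset.card_pos.2 ⟨i, Finset.mem_filter.2 ⟨Finset.mem_univ i, rfl⟩⟩
  have hnSz : ∀ x ∈ Sz, 0 < n x := by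
    intro x hx
    obtain ⟨i, _, rfl⟩ := Finset.mem_image.1 hx
    exact hn i
  have hmτ : ∀ j, 0 < m (τ j) := fun j => by
    rw [← hτ (τ j)]
    exact Finset.card_pos.2 ⟨j, Finset.mem_filter.2 ⟨Finset.mem_univ j, rfl⟩⟩
  have hwτ : ∀ j, 0 < w (e (τ j)) := fun j =>
    lt_of_lt_of_le (hmτ j)
      (Finset.single_le_sum (fun k _ => Nat.zero_le (m k))
        (Finset.mem_filter.2 ⟨Finset.mem_univ (τ j), rfl⟩))
  -- grouping lemmas
  have hgZ : ∀ g : EuclideanSpace ℝ (Fin D) → ℝ,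
      ∑ i, g (z i) = ∑ x ∈ Sz, (n x : ℝ) * g x := by
    intro g
    rw [← Finset.sum_fiberwise_of_maps_to'
      (fun i (_ : i ∈ Finset.univ) => Finset.mem_image_of_mem z (Finset.mem_univ i)) g]
    exact Finset.sum_congr rfl fun x _ => by rw [Finset.sum_const, nsmul_eq_mul]
  have hgτ : ∀ f : Fin K → ℝ, ∑ j, f (τ j) = ∑ k, (m k : ℝ) * f k := by
    intro f
    rw [← Finset.sum_fiberwise' Finset.univ τ f]
    exact Finset.sum_congr rfl fun k _ => by rw [Finset.sum_const, hτ k, nsmul_eq_mul]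
  have hgE : ∀ q : EuclideanSpace ℝ (Fin D) → ℝ,
      ∑ k, (m k : ℝ) * q (e k) = ∑ y ∈ Se, (w y : ℝ) * q y := by
    intro q
    rw [← Finset.sum_fiberwise_of_maps_to
      (fun k (_ : k ∈ Finset.univ) => Finset.mem_image_of_mem e (Finset.mem_univ k))
      (fun k => (m k : ℝ) * q (e k))]
    refine Finset.sum_congr rfl fun y _ => ?_
    have : ∀ k ∈ Finset.univ.filter (fun k => e k = y),
        (m k : ℝ) * q (e k) = (m k : ℝ) * q y := fun k hk => by
      rw [(Finset.mem_filter.1 hk).2]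
    rw [Finset.sum_congr rfl this, ← Finset.sum_mul, hw_def, Nat.cast_sum]
  have hinner : ∀ q : EuclideanSpace ℝ (Fin D) → ℝ, (∀ y, w y = 0 → q y = 0) →
      ∑ j, q (e (τ j)) / (w (e (τ j)) : ℝ) = ∑ y ∈ Se, q y := by
    intro q hq
    rw [hgτ (fun k => q (e k) / (w (e k) : ℝ)), hgE (fun y => q y / (w y : ℝ))]
    refine Finset.sum_congr rfl fun y _ => ?_
    rcases Nat.eq_zero_or_pos (w y) with h | h
    · rw [h, hq y h]; simp
    · rw [mul_comm, div_mul_cancel₀ _ (Nat.cast_ne_zero.2 h.ne' : ((w y : ℝ)) ≠ 0)]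
  have houter : ∀ g : EuclideanSpace ℝ (Fin D) → ℝ,
      ∑ i, g (z i) / (n (z i) : ℝ) = ∑ x ∈ Sz, g x := by
    intro g
    rw [hgZ (fun x => g x / (n x : ℝ))]
    refine Finset.sum_congr rfl fun x hx => ?_
    rw [mul_comm, div_mul_cancel₀ _ (Nat.cast_ne_zero.2 (hnSz x hx).ne' : (n x : ℝ) ≠ 0)]
  -- the doubly stochastic matrix
  set M : Matrix (Fin N) (Fin N) ℝ :=
    fun i j => ((N : ℝ) / n (z i)) * (P (z i) (e (τ j)) / w (e (τ j))) with hM_def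
  have hMa : ∀ i j, M i j = ((N : ℝ) / n (z i)) * (P (z i) (e (τ j)) / w (e (τ j))) :=
    fun i j => rfl
  have hMnn : ∀ i j, 0 ≤ M i j := fun i j =>
    mul_nonneg (div_nonneg (Nat.cast_nonneg _) (Nat.cast_nonneg _))
      (div_nonneg (hPnn _ _) (Nat.cast_nonneg _))
  have hrowM : ∀ i, ∑ j, M i j = 1 := by
    intro i
    rw [Finset.sum_congr rfl (fun j _ => hMa i j)]
    rw [← Finset.mul_sum, hinner (fun y => P (z i) y) (fun y h => hP0 _ y h), hrow (z i)]
    rw [div_mul_div_comm, mul_comm (N : ℝ) _]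
    exact div_self (mul_ne_zero (Nat.cast_ne_zero.2 (hn i).ne') hNR.ne')
  have hcolM : ∀ j, ∑ i, M i j = 1 := by
    intro j
    have h1 : ∀ i, M i j
        = ((N : ℝ) * (P (z i) (e (τ j)) / w (e (τ j)))) / (n (z i) : ℝ) := fun i => by
      rw [hMa]; ring
    rw [Finset.sum_congr rfl (fun i _ => h1 i),
      houter (fun x => (N : ℝ) * (P x (e (τ j)) / w (e (τ j))))]
    have h2 : ∀ x, (N : ℝ) * (P x (e (τ j)) / w (e (τ j)))
        = ((N : ℝ) / w (e (τ j))) * P x (e (τ j)) := fun x => by ring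
    rw [Finset.sum_congr rfl (fun x _ => h2 x), ← Finset.mul_sum, hcol (e (τ j))]
    rw [div_mul_div_comm, mul_comm (N : ℝ) _]
    exact div_self (mul_ne_zero (Nat.cast_ne_zero.2 (hwτ j).ne') hNR.ne')
  have hDS : M ∈ doublyStochastic ℝ (Fin N) :=
    mem_doublyStochastic_iff_sum.2 ⟨hMnn, hrowM, hcolM⟩
  -- cost identity
  have hcostM : ∑ i, ∑ j, M i j * dist (z i) (e (τ j))
      = (N : ℝ) * ∑ x ∈ Sz, ∑ y ∈ Se, P x y * dist x y := by
    have h1 : ∀ i, ∑ j, M i j * dist (z i) (e (τ j))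
        = ((N : ℝ) * ∑ y ∈ Se, P (z i) y * dist (z i) y) / (n (z i) : ℝ) := by
      intro i
      have h2 : ∀ j, M i j * dist (z i) (e (τ j))
          = ((N : ℝ) / n (z i)) * ((P (z i) (e (τ j)) * dist (z i) (e (τ j))) / w (e (τ j))) :=
        fun j => by rw [hMa]; ring
      rw [Finset.sum_congr rfl (fun j _ => h2 j), ← Finset.mul_sum,
        hinner (fun y => P (z i) y * dist (z i) y) (fun y h => by show P (z i) y * dist (z i) y = 0; rw [hP0 _ y h, zero_mul])]
      ring
    rw [Finset.sum_congr rfl (fun i _ => h1 i),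
      houter (fun x => (N : ℝ) * ∑ y ∈ Se, P x y * dist x y), ← Finset.mul_sum]
  -- Birkhoff's theorem
  obtain ⟨wt, hwt0, hwt1, hwtM⟩ := exists_eq_sum_perm_of_mem_doublyStochastic hDS
  have hMij : ∀ i j, M i j = ∑ ρ : Equiv.Perm (Fin N), wt ρ * (ρ.permMatrix ℝ) i j := by
    intro i j
    rw [← hwtM]
    simp [Finset.sum_apply, Matrix.sum_apply, Matrix.smul_apply, smul_eq_mul]
  have hperm : ∀ ρ : Equiv.Perm (Fin N),
      ∑ i, ∑ j, (ρ.permMatrix ℝ) i j * dist (z i) (e (τ j))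
        = ∑ i, dist (z i) (e (τ (ρ i))) := by
    intro ρ
    refine Finset.sum_congr rfl fun i _ => ?_
    have hpm : ∀ j, (ρ.permMatrix ℝ) i j = if j = ρ i then (1:ℝ) else 0 := by
      intro j
      simp [Equiv.Perm.permMatrix, PEquiv.toMatrix_apply, Equiv.toPEquiv_apply,
        Option.mem_def, eq_comm]
    rw [Finset.sum_congr rfl (fun j _ => by rw [hpm j])]
    simp [ite_mul]
  have hfib : ∀ ρ : Equiv.Perm (Fin N), ∀ k,
      (Finset.univ.filter (fun i => τ (ρ i) = k)).card = m k := by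
    intro ρ k
    rw [← hτ k]
    apply Finset.card_bij (fun i _ => ρ i)
    · intro a ha
      simp only [Finset.mem_filter, Finset.mem_univ, true_and] at ha ⊢
      exact ha
    · intro a _ b _ hab
      exact ρ.injective hab
    · intro b hb
      simp only [Finset.mem_filter, Finset.mem_univ, true_and] at hb
      exact ⟨ρ.symm b, by simp [Finset.mem_filter, hb], by simp⟩
  have hge : ∀ ρ : Equiv.Perm (Fin N),
      ∑ i, ‖z i - e (σ₀ i)‖ ≤ ∑ i, dist (z i) (e (τ (ρ i))) := by
    intro ρ
    have := hmin (fun i => τ (ρ i)) (hfib ρ)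
    simpa [dist_eq_norm] using this
  have hkey : ∑ i, ‖z i - e (σ₀ i)‖ ≤ (N : ℝ) * ∑ x ∈ Sz, ∑ y ∈ Se, P x y * dist x y := by
    rw [← hcostM]
    have h1 : ∑ i, ∑ j, M i j * dist (z i) (e (τ j))
        = ∑ ρ : Equiv.Perm (Fin N), wt ρ * ∑ i, dist (z i) (e (τ (ρ i))) := by
      calc ∑ i, ∑ j, M i j * dist (z i) (e (τ j))
          = ∑ i, ∑ j, ∑ ρ : Equiv.Perm (Fin N),
              wt ρ * ((ρ.permMatrix ℝ) i j * dist (z i) (e (τ j))) := by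
            refine Finset.sum_congr rfl fun i _ => Finset.sum_congr rfl fun j _ => ?_
            rw [hMij i j, Finset.sum_mul]
            exact Finset.sum_congr rfl fun ρ _ => by ring
        _ = ∑ ρ : Equiv.Perm (Fin N), ∑ i, ∑ j,
              wt ρ * ((ρ.permMatrix ℝ) i j * dist (z i) (e (τ j))) :=
            sum_rotate _
        _ = ∑ ρ : Equiv.Perm (Fin N), wt ρ * ∑ i, dist (z i) (e (τ (ρ i))) := by
            refine Finset.sum_congr rfl fun ρ _ => ?_
            have hstep : ∑ i, ∑ j, wt ρ * ((ρ.permMatrix ℝ) i j * dist (z i) (e (τ j)))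
                = wt ρ * ∑ i, ∑ j, (ρ.permMatrix ℝ) i j * dist (z i) (e (τ j)) := by
              rw [Finset.mul_sum]
              exact Finset.sum_congr rfl fun i _ => (Finset.mul_sum _ _ _).symm
            rw [hstep, hperm ρ]
    rw [h1]
    calc ∑ i, ‖z i - e (σ₀ i)‖ = ∑ ρ : Equiv.Perm (Fin N), wt ρ * ∑ i, ‖z i - e (σ₀ i)‖ := by
          rw [← Finset.sum_mul, hwt1, one_mul]
      _ ≤ ∑ ρ : Equiv.Perm (Fin N), wt ρ * ∑ i, dist (z i) (e (τ (ρ i))) :=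
          Finset.sum_le_sum fun ρ _ => mul_le_mul_of_nonneg_left (hge ρ) (hwt0 ρ)
  have hfrac : (1 / (N : ℝ)) * ∑ i, ‖z i - e (σ₀ i)‖
      ≤ ∑ x ∈ Sz, ∑ y ∈ Se, P x y * dist x y := by
    rw [one_div_mul_eq_div, div_le_iff₀ hNR]
    rw [mul_comm] at hkey
    exact hkey
  have hPa : ∀ x y : EuclideanSpace ℝ (Fin D), P x y = (π {(x, y)}).toReal := fun _ _ => rfl
  have hlow : ENNReal.ofReal (∑ x ∈ Sz, ∑ y ∈ Se, P x y * dist x y)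
      ≤ ∫⁻ p, edist p.1 p.2 ∂π := by
    have h1 : ENNReal.ofReal (∑ x ∈ Sz, ∑ y ∈ Se, P x y * dist x y)
        = ∑ x ∈ Sz, ∑ y ∈ Se, edist x y * π {(x, y)} := by
      rw [ENNReal.ofReal_sum_of_nonneg
        (fun x _ => Finset.sum_nonneg fun y _ => mul_nonneg (hPnn x y) dist_nonneg)]
      refine Finset.sum_congr rfl fun x _ => ?_
      rw [ENNReal.ofReal_sum_of_nonneg (fun y _ => mul_nonneg (hPnn x y) dist_nonneg)]
      refine Finset.sum_congr rfl fun y _ => ?_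
      rw [ENNReal.ofReal_mul (hPnn x y), hPa, ENNReal.ofReal_toReal (measure_ne_top π _),
        edist_dist, mul_comm]
    have h2 : ∑ x ∈ Sz, ∑ y ∈ Se, edist x y * π {(x, y)}
        = ∫⁻ p in ↑(Sz ×ˢ Se), edist p.1 p.2 ∂π := by
      rw [lintegral_finset, Finset.sum_product]
    rw [h1, h2]
    exact setLIntegral_le_lintegral _ _
  exact le_trans (ENNReal.ofReal_le_ofReal hfrac) hlow


/-- **Eq. (68), Corollary 1 of the paper**: with `π_k = m_k / N` and `∑ k, m_k = N`, the
Wasserstein distance (Euclidean cost) between the empirical measure `(1/N) ∑ n, δ_{z n}`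
and the codebook measure `∑ k, π_k δ_{e k}` equals `(1/N)` times the minimum, over all
assignment functions `σ : Fin N → Fin K` whose fiber over each `k` has exactly `m k`
elements, of `∑ n, ‖z n − e (σ n)‖`. -/
theorem stmt8 {N K D : ℕ} (hN : 0 < N)
    (z : Fin N → EuclideanSpace ℝ (Fin D)) (e : Fin K → EuclideanSpace ℝ (Fin D))
    (m : Fin K → ℕ) (hm : ∑ k, m k = N) :
    ∃ σ₀ : Fin N → Fin K,
      (∀ k, (Finset.univ.filter (fun i => σ₀ i = k)).card = m k) ∧
      (∀ σ : Fin N → Fin K,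
        (∀ k, (Finset.univ.filter (fun i => σ i = k)).card = m k) →
        ∑ i, ‖z i - e (σ₀ i)‖ ≤ ∑ i, ‖z i - e (σ i)‖) ∧
      Wcost (fun a b => edist a b)
          ((N : ℝ≥0∞)⁻¹ • ∑ i, Measure.dirac (z i))
          (∑ k, ((m k : ℝ≥0∞) / (N : ℝ≥0∞)) • Measure.dirac (e k))
        = ENNReal.ofReal ((1 / (N : ℝ)) * ∑ i, ‖z i - e (σ₀ i)‖) := by
  classical
  obtain ⟨τ, hτ⟩ := exists_assignment m hm
  set A : Finset (Fin N → Fin K) :=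
    Finset.univ.filter
      (fun σ => ∀ k, (Finset.univ.filter (fun i => σ i = k)).card = m k) with hA
  have hτA : τ ∈ A := Finset.mem_filter.2 ⟨Finset.mem_univ τ, hτ⟩
  obtain ⟨σ₀, hσ₀A, hσ₀min⟩ :=
    A.exists_min_image (fun σ => ∑ i, ‖z i - e (σ i)‖) ⟨τ, hτA⟩
  have hσ₀fib : ∀ k, (Finset.univ.filter (fun i => σ₀ i = k)).card = m k :=
    (Finset.mem_filter.1 hσ₀A).2
  have hmin : ∀ σ : Fin N → Fin K,
      (∀ k, (Finset.univ.filter (fun i => σ i = k)).card = m k) →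
      ∑ i, ‖z i - e (σ₀ i)‖ ≤ ∑ i, ‖z i - e (σ i)‖ := fun σ hσ =>
    hσ₀min σ (Finset.mem_filter.2 ⟨Finset.mem_univ σ, hσ⟩)
  refine ⟨σ₀, hσ₀fib, hmin, le_antisymm (upper_aux hN z e m σ₀ hσ₀fib) ?_⟩
  unfold Wcost
  exact le_iInf fun π => le_iInf fun hprob => le_iInf fun h1 => le_iInf fun h2 =>
    lower_aux hN z e m τ hτ σ₀ hmin π hprob h1 h2
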